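/- Let H be the graph on six vertices u, v, w, a, b, c in which every pair of distinct vertices is adjacent except the three pairs {u, b}, {v, c}, {w, a} (i.e., H is the complete graph K_6 minus a perfect matching; equivalently, H is the total graph of a triangle with vertices u, v, w and edges a = uv, b = vw, c = wu). For every list assignment L with |L(u)| ≥ 2, |L(a)| ≥ 3, |L(c)| ≥ 3, |L(v)| ≥ 4, |L(w)| ≥ 4, and |L(b)| ≥ 4, H has a proper L-coloring. -/

import Mathlib

private lemma pick_out {s t : Finset ℕ} (h : t.card < s.card) : ∃ x, x ∈ s ∧ x ∉ t := by
  by_contra hcon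
  push_neg at hcon
  exact absurd (Finset.card_le_card fun x hx => hcon x hx) (not_le_of_gt h)

private lemma card2 (x y : ℕ) : ({x, y} : Finset ℕ).card ≤ 2 :=
  (Finset.card_insert_le _ _).trans (by simp)

private lemma card3 (x y z : ℕ) : ({x, y, z} : Finset ℕ).card ≤ 3 :=
  (Finset.card_insert_le _ _).trans (Nat.succ_le_succ (card2 y z))

private lemma aux
    (Lu Lv Lw La Lb Lc : Finset ℕ)
    (hue : Lu.card = 2) (hae : La.card = 3) (hce : Lc.card = 3)
    (hve : Lv.card = 4) (hwe : Lw.card = 4) (hbe : Lb.card = 4) :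
    ∃ u v w a b c : ℕ,
      u ∈ Lu ∧ v ∈ Lv ∧ w ∈ Lw ∧ a ∈ La ∧ b ∈ Lb ∧ c ∈ Lc ∧
      u ≠ v ∧ u ≠ w ∧ u ≠ a ∧ u ≠ c ∧
      v ≠ w ∧ v ≠ a ∧ v ≠ b ∧
      w ≠ b ∧ w ≠ c ∧
      a ≠ b ∧ a ≠ c ∧ b ≠ c := by
  have hu : 2 ≤ Lu.card := hue.ge
  have ha : 3 ≤ La.card := hae.ge
  have hc : 3 ≤ Lc.card := hce.ge
  have hv : 4 ≤ Lv.card := hve.ge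
  have hw : 4 ≤ Lw.card := hwe.ge
  have hb : 4 ≤ Lb.card := hbe.ge
  by_cases h1 : (Lv ∩ Lc).Nonempty
  · -- color v = c = x
    obtain ⟨x, hx⟩ := h1
    rw [Finset.mem_inter] at hx
    obtain ⟨u, huL, hu1⟩ := pick_out (s := Lu) (t := {x})
      (lt_of_le_of_lt (by simp) (lt_of_lt_of_le one_lt_two hu))
    obtain ⟨a, haL, ha1⟩ := pick_out (s := La) (t := {u, x})
      (lt_of_lt_of_le (Nat.lt_succ_of_le (card2 u x)) ha)
    obtain ⟨w, hwL, hw1⟩ := pick_out (s := Lw) (t := {u, x})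
      (lt_of_lt_of_le (Nat.lt_succ_of_le ((card2 u x).trans (by norm_num))) hw)
    obtain ⟨b, hbL, hb1⟩ := pick_out (s := Lb) (t := {x, w, a})
      (lt_of_lt_of_le (Nat.lt_succ_of_le (card3 x w a)) hb)
    simp only [Finset.mem_insert, Finset.mem_singleton, not_or] at hu1 ha1 hw1 hb1
    exact ⟨u, x, w, a, b, x, huL, hx.1, hwL, haL, hbL, hx.2,
      hu1, fun h => hw1.1 h.symm, fun h => ha1.1 h.symm, hu1,
      fun h => hw1.2 h.symm, fun h => ha1.2 h.symm, fun h => hb1.1 h.symm,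
      fun h => hb1.2.1 h.symm, hw1.2,
      fun h => hb1.2.2 h.symm, ha1.2, hb1.1⟩
  · have hdisj : Disjoint Lv Lc := Finset.disjoint_iff_inter_eq_empty.mpr (Finset.not_nonempty_iff_eq_empty.mp h1)
    by_cases h4a : (Lc \ Lb).Nonempty
    · -- color c = γ ∉ Lb
      obtain ⟨γ, hγ⟩ := h4a
      rw [Finset.mem_sdiff] at hγ
      obtain ⟨u, huL, hu1⟩ := pick_out (s := Lu) (t := {γ})
        (lt_of_le_of_lt (by simp) (lt_of_lt_of_le one_lt_two hu))
      obtain ⟨a, haL, ha1⟩ := pick_out (s := La) (t := {u, γ})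
        (lt_of_lt_of_le (Nat.lt_succ_of_le (card2 u γ)) ha)
      obtain ⟨v, hvL, hv1⟩ := pick_out (s := Lv) (t := {u, a})
        (lt_of_lt_of_le (Nat.lt_succ_of_le ((card2 u a).trans (by norm_num))) hv)
      obtain ⟨w, hwL, hw1⟩ := pick_out (s := Lw) (t := {u, v, γ})
        (lt_of_lt_of_le (Nat.lt_succ_of_le (card3 u v γ)) hw)
      obtain ⟨b, hbL, hb1⟩ := pick_out (s := Lb) (t := {v, w, a})
        (lt_of_lt_of_le (Nat.lt_succ_of_le (card3 v w a)) hb)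
      simp only [Finset.mem_insert, Finset.mem_singleton, not_or] at hu1 ha1 hv1 hw1 hb1
      refine ⟨u, v, w, a, b, γ, huL, hvL, hwL, haL, hbL, hγ.1,
        fun h => hv1.1 h.symm, fun h => hw1.1 h.symm, fun h => ha1.1 h.symm, hu1,
        fun h => hw1.2.1 h.symm, hv1.2, fun h => hb1.1 h.symm,
        fun h => hb1.2.1 h.symm, hw1.2.2,
        fun h => hb1.2.2 h.symm, ha1.2, fun h => hγ.2 (h ▸ hbL)⟩
    · by_cases h4b : (La \ Lb).Nonempty
      · -- color a = α ∉ Lb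
        obtain ⟨α, hα⟩ := h4b
        rw [Finset.mem_sdiff] at hα
        obtain ⟨u, huL, hu1⟩ := pick_out (s := Lu) (t := {α})
          (lt_of_le_of_lt (by simp) (lt_of_lt_of_le one_lt_two hu))
        obtain ⟨c, hcL, hc1⟩ := pick_out (s := Lc) (t := {u, α})
          (lt_of_lt_of_le (Nat.lt_succ_of_le (card2 u α)) hc)
        obtain ⟨v, hvL, hv1⟩ := pick_out (s := Lv) (t := {u, α})
          (lt_of_lt_of_le (Nat.lt_succ_of_le ((card2 u α).trans (by norm_num))) hv)
        obtain ⟨w, hwL, hw1⟩ := pick_out (s := Lw) (t := {u, v, c})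
          (lt_of_lt_of_le (Nat.lt_succ_of_le (card3 u v c)) hw)
        obtain ⟨b, hbL, hb1⟩ := pick_out (s := Lb) (t := {v, w, c})
          (lt_of_lt_of_le (Nat.lt_succ_of_le (card3 v w c)) hb)
        simp only [Finset.mem_insert, Finset.mem_singleton, not_or] at hu1 hc1 hv1 hw1 hb1
        refine ⟨u, v, w, α, b, c, huL, hvL, hwL, hα.1, hbL, hcL,
          fun h => hv1.1 h.symm, fun h => hw1.1 h.symm, hu1, fun h => hc1.1 h.symm,
          fun h => hw1.2.1 h.symm, hv1.2, fun h => hb1.1 h.symm,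
          fun h => hb1.2.1 h.symm, hw1.2.2,
          fun h => hα.2 (h ▸ hbL), fun h => hc1.2 h.symm, hb1.2.2⟩
      · -- Lc ⊆ Lb and La ⊆ Lb; choose v outside Lb
        rw [Finset.not_nonempty_iff_eq_empty, Finset.sdiff_eq_empty_iff_subset] at h4a h4b
        obtain ⟨u, huL, -⟩ := pick_out (s := Lu) (t := ∅)
          (lt_of_lt_of_le (by simp) hu)
        obtain ⟨a, haL, ha1⟩ := pick_out (s := La) (t := {u})
          (lt_of_lt_of_le (by norm_num [Finset.card_singleton]) ha)
        obtain ⟨c, hcL, hc1⟩ := pick_out (s := Lc) (t := {u, a})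
          (lt_of_lt_of_le (Nat.lt_succ_of_le (card2 u a)) hc)
        -- |Lb ∩ Lv| ≤ |Lb| - |Lc| isn't directly enough when lists are big, so bound via Lb \ Lc
        have hvb : (Lb ∩ Lv) ⊆ Lb \ Lc := by
          intro x hx
          rw [Finset.mem_inter] at hx
          exact Finset.mem_sdiff.mpr ⟨hx.1, fun hxc => (Finset.disjoint_left.mp hdisj) hx.2 hxc⟩
        have hcard : ({u, a} ∪ (Lb ∩ Lv)).card < Lv.card := by
          calc ({u, a} ∪ (Lb ∩ Lv)).card ≤ ({u, a} : Finset ℕ).card + (Lb ∩ Lv).card :=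
                Finset.card_union_le _ _
            _ ≤ 2 + (Lb \ Lc).card := Nat.add_le_add (card2 u a) (Finset.card_le_card hvb)
            _ < Lv.card := by
                have hsd : (Lb \ Lc).card + Lc.card = Lb.card := by
                  rw [Finset.card_sdiff_add_card_eq_card h4a]
                omega
        obtain ⟨v, hvL, hv1⟩ := pick_out (s := Lv) (t := {u, a} ∪ (Lb ∩ Lv)) hcard
        obtain ⟨w, hwL, hw1⟩ := pick_out (s := Lw) (t := {u, v, c})
          (lt_of_lt_of_le (Nat.lt_succ_of_le (card3 u v c)) hw)
        obtain ⟨b, hbL, hb1⟩ := pick_out (s := Lb) (t := {w, a, c})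
          (lt_of_lt_of_le (Nat.lt_succ_of_le (card3 w a c)) hb)
        rw [Finset.mem_union, not_or] at hv1
        have hvnb : v ∉ Lb := fun h => hv1.2 (Finset.mem_inter.mpr ⟨h, hvL⟩)
        simp only [Finset.mem_insert, Finset.mem_singleton, not_or] at ha1 hc1 hw1 hb1
        have hv1' := hv1.1
        simp only [Finset.mem_insert, Finset.mem_singleton, not_or] at hv1'
        refine ⟨u, v, w, a, b, c, huL, hvL, hwL, haL, hbL, hcL,
          fun h => hv1'.1 h.symm, fun h => hw1.1 h.symm, fun h => ha1 h.symm,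
          fun h => hc1.1 h.symm,
          fun h => hw1.2.1 h.symm, hv1'.2, fun h => hvnb (h ▸ hbL),
          fun h => hb1.1 h.symm, hw1.2.2,
          fun h => hb1.2.1 h.symm, fun h => hc1.2 h.symm, hb1.2.2⟩


/-- The graph `K₆` minus a perfect matching on the vertices `u, v, w, a, b, c`, where the
non-adjacent pairs are `{u,b}`, `{v,c}`, `{w,a}` (this is the total graph of a triangle), is
colorable from any lists with `|L(u)| ≥ 2`, `|L(a)|, |L(c)| ≥ 3` and
`|L(v)|, |L(w)|, |L(b)| ≥ 4`. -/
theorem K6_minus_matching_choosable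
    (Lu Lv Lw La Lb Lc : Finset ℕ)
    (hu : 2 ≤ Lu.card) (ha : 3 ≤ La.card) (hc : 3 ≤ Lc.card)
    (hv : 4 ≤ Lv.card) (hw : 4 ≤ Lw.card) (hb : 4 ≤ Lb.card) :
    ∃ u v w a b c : ℕ,
      u ∈ Lu ∧ v ∈ Lv ∧ w ∈ Lw ∧ a ∈ La ∧ b ∈ Lb ∧ c ∈ Lc ∧
      u ≠ v ∧ u ≠ w ∧ u ≠ a ∧ u ≠ c ∧
      v ≠ w ∧ v ≠ a ∧ v ≠ b ∧
      w ≠ b ∧ w ≠ c ∧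
      a ≠ b ∧ a ≠ c ∧ b ≠ c := by
  obtain ⟨Lu', hu1, hu2⟩ := Finset.exists_subset_card_eq hu
  obtain ⟨La', ha1, ha2⟩ := Finset.exists_subset_card_eq ha
  obtain ⟨Lc', hc1, hc2⟩ := Finset.exists_subset_card_eq hc
  obtain ⟨Lv', hv1, hv2⟩ := Finset.exists_subset_card_eq hv
  obtain ⟨Lw', hw1, hw2⟩ := Finset.exists_subset_card_eq hw
  obtain ⟨Lb', hb1, hb2⟩ := Finset.exists_subset_card_eq hb
  obtain ⟨u, v, w, a, b, c, m1, m2, m3, m4, m5, m6, rest⟩ :=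
    aux Lu' Lv' Lw' La' Lb' Lc' hu2 ha2 hc2 hv2 hw2 hb2
  exact ⟨u, v, w, a, b, c, hu1 m1, hv1 m2, hw1 m3, ha1 m4, hb1 m5, hc1 m6, rest⟩
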